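/- Let n ≥ 1, set N = 2n, and let a_1, …, a_{2n} be nonzero real numbers such that a_{2k−1} = q·a_{2k} for 1 ≤ k ≤ n. Then the matrix J = Σ_{k=1}^{n} ( −a_{2k−1} e_{2k,2k−1} + a_{2k} e_{2k−1,2k} ) satisfies the reflection equation R J₁ R^{t₁} J₂ = J₂ R^{t₁} J₁ R with respect to the type-A R-matrix of size N. (This is the case AII, corresponding to the symmetric space SU(2n)/Sp(2n), of Theorem 1(1).) -/

import Mathlib

open Matrix

noncomputable section

/-- Kronecker product of two `N × N` matrices, with `(eᵢⱼ ⊗ eₖₗ)` having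
`((i,k),(j,l))`-entry `1`. -/
def kron {N : ℕ} (A B : Matrix (Fin N) (Fin N) ℂ) :
    Matrix (Fin N × Fin N) (Fin N × Fin N) ℂ :=
  fun p r => A p.1 r.1 * B p.2 r.2

/-- Partial transpose in the first tensor factor. -/
def ptransp {N : ℕ} (R : Matrix (Fin N × Fin N) (Fin N × Fin N) ℂ) :
    Matrix (Fin N × Fin N) (Fin N × Fin N) ℂ :=
  fun p r => R (r.1, p.2) (p.1, r.2)

/-- The reflection equation `R J₁ R^{t₁} J₂ = J₂ R^{t₁} J₁ R`. -/
def ReflectionEq {N : ℕ} (R : Matrix (Fin N × Fin N) (Fin N × Fin N) ℂ)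
    (J : Matrix (Fin N) (Fin N) ℂ) : Prop :=
  R * kron J 1 * ptransp R * kron 1 J = kron 1 J * ptransp R * kron J 1 * R

/-- Matrix units. -/
def e {N : ℕ} (i j : Fin N) : Matrix (Fin N) (Fin N) ℂ :=
  Matrix.single i j 1

/-- The type-A R-matrix of size `N`:
`R = q^{-1/N} ( Σ_{i,j} q^{δ_{ij}} e_{ii} ⊗ e_{jj} + (q − q⁻¹) Σ_{j<i} e_{ij} ⊗ e_{ji} )`. -/
def RmatA (q : ℝ) (N : ℕ) : Matrix (Fin N × Fin N) (Fin N × Fin N) ℂ :=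
  ((q ^ (-1 / (N : ℝ)) : ℝ) : ℂ) •
    ((∑ i : Fin N, ∑ j : Fin N,
        ((q ^ (if i = j then (1 : ℝ) else 0) : ℝ) : ℂ) • kron (e i i) (e j j))
      + ((q : ℂ) - (q : ℂ)⁻¹) •
        ∑ i : Fin N, ∑ j : Fin N,
          if (j : ℕ) < (i : ℕ) then kron (e i j) (e j i) else 0)

/-- The index (0-based) of the (1-based) index `2k-1`, for `1 ≤ k ≤ n`, inside `Fin (2*n)`. -/
def dblo {n : ℕ} (k : Fin n) : Fin (2 * n) := ⟨2 * (k : ℕ), by have := k.isLt; omega⟩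

/-- The index (0-based) of the (1-based) index `2k`, for `1 ≤ k ≤ n`, inside `Fin (2*n)`. -/
def dble {n : ℕ} (k : Fin n) : Fin (2 * n) := ⟨2 * (k : ℕ) + 1, by have := k.isLt; omega⟩


namespace RE

variable {N : ℕ}

/-! ### Entry-level descriptions of the matrices involved -/

def Rf (q : ℂ) (p r : Fin N × Fin N) : ℂ :=
  (if p.1 = r.1 ∧ p.2 = r.2 then (if p.1 = p.2 then q else 1) else 0)
  + (q - q⁻¹) * (if p.2 = r.1 ∧ p.1 = r.2 ∧ (r.1 : ℕ) < (p.1 : ℕ) then 1 else 0)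

def M1f (q : ℂ) (J : Matrix (Fin N) (Fin N) ℂ) (p r : Fin N × Fin N) : ℂ :=
  (if p.2 = r.2 then (if p.1 = p.2 then q else 1) * J p.1 r.1 else 0)
  + (q - q⁻¹) * (if p.1 = r.2 ∧ (p.2 : ℕ) < (p.1 : ℕ) then J p.2 r.1 else 0)

def M2f (q : ℂ) (J : Matrix (Fin N) (Fin N) ℂ) (p r : Fin N × Fin N) : ℂ :=
  (if p.2 = r.2 then (if p.1 = p.2 then q else 1) * (if r.1 = p.2 then q else 1) * J p.1 r.1 else 0)
  + (q - q⁻¹) * (if r.1 = r.2 ∧ (p.2 : ℕ) < (r.1 : ℕ) then (if p.1 = p.2 then q else 1) * J p.1 p.2 else 0)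
  + (q - q⁻¹) * (if p.1 = r.2 ∧ (p.2 : ℕ) < (p.1 : ℕ) then (if r.1 = p.1 then q else 1) * J p.2 r.1 else 0)
  + (q - q⁻¹) * (q - q⁻¹) * (if r.1 = r.2 ∧ (p.2 : ℕ) < (p.1 : ℕ) ∧ (p.1 : ℕ) < (r.1 : ℕ) then J p.2 p.1 else 0)

def Lf (q : ℂ) (J : Matrix (Fin N) (Fin N) ℂ) (p r : Fin N × Fin N) : ℂ :=
  (if p.1 = p.2 then q else 1) * (if r.1 = p.2 then q else 1) * (J p.1 r.1 * J p.2 r.2)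
  + (q - q⁻¹) * (if (p.2 : ℕ) < (r.1 : ℕ) then (if p.1 = p.2 then q else 1) * (J p.1 p.2 * J r.1 r.2) else 0)
  + (q - q⁻¹) * (if (p.2 : ℕ) < (p.1 : ℕ) then (if r.1 = p.1 then q else 1) * (J p.2 r.1 * J p.1 r.2) else 0)
  + (q - q⁻¹) * (q - q⁻¹) * (if (p.2 : ℕ) < (p.1 : ℕ) ∧ (p.1 : ℕ) < (r.1 : ℕ) then J p.2 p.1 * J r.1 r.2 else 0)

def N1f (q : ℂ) (J : Matrix (Fin N) (Fin N) ℂ) (p r : Fin N × Fin N) : ℂ :=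
  (if r.1 = p.1 then (if r.1 = r.2 then q else 1) * J p.2 r.2 else 0)
  + (q - q⁻¹) * (if r.1 = r.2 ∧ (p.1 : ℕ) < (r.1 : ℕ) then J p.2 p.1 else 0)

def N2f (q : ℂ) (J : Matrix (Fin N) (Fin N) ℂ) (p r : Fin N × Fin N) : ℂ :=
  (if p.1 = r.2 then q else 1) * (J p.2 r.2 * J p.1 r.1)
  + (q - q⁻¹) * (if (p.1 : ℕ) < (r.2 : ℕ) then J p.2 p.1 * J r.2 r.1 else 0)

def Rhf (q : ℂ) (J : Matrix (Fin N) (Fin N) ℂ) (p r : Fin N × Fin N) : ℂ :=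
  (if p.1 = r.2 then q else 1) * (if r.1 = r.2 then q else 1) * (J p.2 r.2 * J p.1 r.1)
  + (q - q⁻¹) * (if (r.1 : ℕ) < (r.2 : ℕ) then (if p.1 = r.1 then q else 1) * (J p.2 r.1 * J p.1 r.2) else 0)
  + (q - q⁻¹) * (if (p.1 : ℕ) < (r.2 : ℕ) then (if r.1 = r.2 then q else 1) * (J p.2 p.1 * J r.2 r.1) else 0)
  + (q - q⁻¹) * (q - q⁻¹) * (if (p.1 : ℕ) < (r.1 : ℕ) ∧ (r.1 : ℕ) < (r.2 : ℕ) then J p.2 p.1 * J r.1 r.2 else 0)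

/-! ### Helper simp lemmas for collapsing sums of `if`s -/

lemma sum_ite_irrel' {α : Type*} [Fintype α] (P : Prop) [Decidable P] (f : α → ℂ) :
    (∑ x : α, if P then f x else 0) = if P then ∑ x : α, f x else 0 := by
  split <;> simp

lemma ite_add_zero' (P : Prop) [Decidable P] (a b : ℂ) :
    (if P then a + b else 0) = (if P then a else 0) + (if P then b else 0) := by
  split <;> simp

lemma ite_lt_comm (x u : ℕ) (k j : Fin N) (a : ℂ) :
    (if x < u then if k = j then a else 0 else 0) = if k = j then if x < u then a else 0 else 0 := by
  split_ifs <;> rfl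

lemma ite_apply_mat (c : Prop) [Decidable c] (M : Matrix (Fin N × Fin N) (Fin N × Fin N) ℂ)
    (p r : Fin N × Fin N) : (if c then M else 0) p r = if c then M p r else 0 := by
  split <;> rfl

lemma ptransp_of (q : ℂ) :
    ptransp (Matrix.of (Rf q) : Matrix (Fin N × Fin N) (Fin N × Fin N) ℂ)
      = Matrix.of (fun p r => Rf q (r.1, p.2) (p.1, r.2)) := rfl

/-! ### The four-fold matrix products, computed step by step -/

lemma mul1 (q : ℂ) (J : Matrix (Fin N) (Fin N) ℂ) :
    (Matrix.of (Rf q)) * kron J 1 = Matrix.of (M1f q J) := by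
  ext ⟨i, k⟩ ⟨r, t⟩
  simp only [Matrix.mul_apply, Fintype.sum_prod_type, Matrix.of_apply, Rf, M1f, kron,
    Matrix.one_apply, ite_and, mul_ite, ite_mul, mul_zero, zero_mul, mul_one, one_mul,
    add_mul, Finset.sum_add_distrib, Finset.sum_ite_eq, Finset.sum_ite_eq',
    Finset.mem_univ, if_true, Finset.sum_const_zero, add_zero, zero_add]

lemma mul2 (q : ℂ) (J : Matrix (Fin N) (Fin N) ℂ) :
    Matrix.of (M1f q J) * ptransp (Matrix.of (Rf q)) = Matrix.of (M2f q J) := by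
  rw [ptransp_of]
  ext ⟨i, k⟩ ⟨u, v⟩
  simp only [Matrix.mul_apply, Fintype.sum_prod_type, Matrix.of_apply, Rf, M1f, M2f,
    Matrix.one_apply, ite_and, mul_ite, ite_mul, mul_zero, zero_mul, mul_one, one_mul,
    mul_add, add_mul, Finset.sum_add_distrib, Finset.sum_ite_eq, Finset.sum_ite_eq',
    Finset.mem_univ, if_true, Finset.sum_const_zero, add_zero, zero_add,
    sum_ite_irrel', ite_add_zero', ite_lt_comm]
  split_ifs <;> first | ring1 | (exfalso; simp only [Fin.ext_iff, not_lt] at *; omega)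

lemma mul3 (q : ℂ) (J : Matrix (Fin N) (Fin N) ℂ) :
    Matrix.of (M2f q J) * kron 1 J = Matrix.of (Lf q J) := by
  ext ⟨i, k⟩ ⟨j, l⟩
  simp only [Matrix.mul_apply, Fintype.sum_prod_type, Matrix.of_apply, M2f, Lf, kron,
    Matrix.one_apply, ite_and, mul_ite, ite_mul, mul_zero, zero_mul, mul_one, one_mul,
    mul_add, add_mul, Finset.sum_add_distrib, Finset.sum_ite_eq, Finset.sum_ite_eq',
    Finset.mem_univ, if_true, Finset.sum_const_zero, add_zero, zero_add,
    sum_ite_irrel', ite_add_zero', ite_lt_comm]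
  split_ifs <;> first | ring1 | (exfalso; simp only [Fin.ext_iff, not_lt] at *; omega)

lemma nul1 (q : ℂ) (J : Matrix (Fin N) (Fin N) ℂ) :
    kron 1 J * ptransp (Matrix.of (Rf q)) = Matrix.of (N1f q J) := by
  rw [ptransp_of]
  ext ⟨i, k⟩ ⟨u, v⟩
  simp only [Matrix.mul_apply, Fintype.sum_prod_type, Matrix.of_apply, Rf, N1f, kron,
    Matrix.one_apply, ite_and, mul_ite, ite_mul, mul_zero, zero_mul, mul_one, one_mul,
    mul_add, add_mul, Finset.sum_add_distrib, Finset.sum_ite_eq, Finset.sum_ite_eq',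
    Finset.mem_univ, if_true, Finset.sum_const_zero, add_zero, zero_add,
    sum_ite_irrel', ite_add_zero', ite_lt_comm]
  split_ifs <;> first | ring1 | (exfalso; simp only [Fin.ext_iff, not_lt] at *; omega)

lemma nul2 (q : ℂ) (J : Matrix (Fin N) (Fin N) ℂ) :
    Matrix.of (N1f q J) * kron J 1 = Matrix.of (N2f q J) := by
  ext ⟨i, k⟩ ⟨r, t⟩
  simp only [Matrix.mul_apply, Fintype.sum_prod_type, Matrix.of_apply, N1f, N2f, kron,
    Matrix.one_apply, ite_and, mul_ite, ite_mul, mul_zero, zero_mul, mul_one, one_mul,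
    mul_add, add_mul, Finset.sum_add_distrib, Finset.sum_ite_eq, Finset.sum_ite_eq',
    Finset.mem_univ, if_true, Finset.sum_const_zero, add_zero, zero_add,
    sum_ite_irrel', ite_add_zero', ite_lt_comm]
  split_ifs <;> first | ring1 | (exfalso; simp only [Fin.ext_iff, not_lt] at *; omega)

lemma nul3 (q : ℂ) (J : Matrix (Fin N) (Fin N) ℂ) :
    Matrix.of (N2f q J) * Matrix.of (Rf q) = Matrix.of (Rhf q J) := by
  ext ⟨i, k⟩ ⟨j, l⟩
  simp only [Matrix.mul_apply, Fintype.sum_prod_type, Matrix.of_apply, Rf, N2f, Rhf, kron,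
    Matrix.one_apply, ite_and, mul_ite, ite_mul, mul_zero, zero_mul, mul_one, one_mul,
    mul_add, add_mul, Finset.sum_add_distrib, Finset.sum_ite_eq, Finset.sum_ite_eq',
    Finset.mem_univ, if_true, Finset.sum_const_zero, add_zero, zero_add,
    sum_ite_irrel', ite_add_zero', ite_lt_comm]
  split_ifs <;> first | ring1 | (exfalso; simp only [Fin.ext_iff, not_lt] at *; omega)

/-! ### Identification of the R-matrix -/

lemma RmatA_eq (q : ℝ) (N : ℕ) :
    RmatA q N = ((q ^ (-1 / (N : ℝ)) : ℝ) : ℂ) • Matrix.of (Rf (q : ℂ)) := by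
  unfold RmatA
  congr 1
  ext ⟨p1, p2⟩ ⟨r1, r2⟩
  simp only [Matrix.add_apply, Matrix.sum_apply, Matrix.smul_apply, kron, e,
    Matrix.single, Matrix.of_apply, ite_apply_mat, Matrix.zero_apply, smul_eq_mul, Rf,
    ite_and, mul_ite, ite_mul, mul_zero, zero_mul, mul_one, one_mul,
    Finset.sum_add_distrib, Finset.sum_ite_eq, Finset.sum_ite_eq',
    Finset.mem_univ, if_true, Finset.sum_const_zero, add_zero, zero_add,
    sum_ite_irrel', ite_add_zero', ite_lt_comm]
  split_ifs <;>
    first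
      | (exfalso; simp only [Fin.ext_iff, not_lt] at *; omega)
      | simp [Real.rpow_one, Real.rpow_zero]

/-! ### The core entrywise identity -/

set_option maxHeartbeats 2000000 in
lemma core (q : ℂ) (hq : q ≠ 0) (σ : Fin N → Fin N) (J : Matrix (Fin N) (Fin N) ℂ)
    (hσσ : ∀ a, σ (σ a) = a)
    (hσne : ∀ a, σ a ≠ a)
    (hJ0 : ∀ a b, b ≠ σ a → J a b = 0)
    (hJq : ∀ a : Fin N, a.val < (σ a).val → J (σ a) a = -q * J a (σ a))
    (hord1 : ∀ a b : Fin N, b ≠ a → b ≠ σ a → (a.val < b.val ↔ (σ a).val < b.val))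
    (hord2 : ∀ a b : Fin N, b ≠ a → b ≠ σ a → (b.val < a.val ↔ b.val < (σ a).val))
    (i k j l : Fin N) :
    Lf q J (i, k) (j, l) = Rhf q J (i, k) (j, l) := by
  have hinj : ∀ a b : Fin N, σ a = σ b → a = b := by
    intro a b h; have := congrArg σ h; rwa [hσσ, hσσ] at this
  simp only [Lf, Rhf]
  by_cases hQ : k = σ i ∧ l = σ j
  · obtain ⟨hk, hl⟩ := hQ
    subst hk hl
    by_cases hji : j = i
    · -- case Q ∧ S : indices (i, σ i, i, σ i)
      subst hji
      have z1 : J j j = 0 := hJ0 _ _ (Ne.symm (hσne j))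
      have z2 : J (σ j) (σ j) = 0 := hJ0 _ _ (fun h => hσne j (hinj _ _ h.symm))
      have hne : ¬ j = σ j := fun h => hσne j h.symm
      have hne2 : ¬ σ j = j := hσne j
      simp only [z1, z2, if_neg hne, if_neg hne2, mul_zero, zero_mul, if_pos rfl,
        lt_self_iff_false, and_false, false_and, if_false, add_zero, zero_add, mul_one, one_mul,
        if_true, eq_self_iff_true]
      by_cases hlt : j.val < (σ j).val
      · have e := hJq j hlt
        have hlt' : ¬ (σ j).val < j.val := by omega
        simp only [if_pos hlt, if_neg hlt', mul_zero, add_zero, zero_add, e]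
        field_simp
        ring1
      · have hvne : (σ j).val ≠ j.val := by simpa [Fin.ext_iff] using hσne j
        have hlt2 : (σ j).val < j.val := by omega
        have e := hJq (σ j) (by rw [hσσ]; exact hlt2)
        rw [hσσ] at e
        simp only [if_pos hlt2, if_neg hlt, mul_zero, add_zero, zero_add, e]
        field_simp
        ring1
    · by_cases hjσ : j = σ i
      · -- case Q ∧ P : indices (i, σ i, σ i, i)
        subst hjσ
        have z1 : J i i = 0 := hJ0 _ _ (Ne.symm (hσne i))
        have z2 : J (σ i) (σ i) = 0 := hJ0 _ _ (fun h => hσne i (hinj _ _ h.symm))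
        have hvne : (σ i).val ≠ i.val := by simpa [Fin.ext_iff] using hσne i
        simp only [hσσ, z1, z2, mul_zero, zero_mul, add_zero, zero_add]
        split_ifs <;> first | ring1 | (exfalso; simp only [Fin.ext_iff, not_lt] at *; omega)
      · -- case Q only : indices (i, σ i, j, σ j) with j ∉ {i, σ i}
        have hiσj : i ≠ σ j := fun h => hjσ (by rw [h, hσσ])
        have z1 : J i j = 0 := hJ0 _ _ hjσ
        have z2 : J (σ i) (σ j) = 0 := hJ0 _ _ (fun h => hjσ (hinj _ _ (by rw [h, hσσ])))
        have z3 : J (σ i) j = 0 := hJ0 _ _ (by rw [hσσ]; exact hji)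
        have z4 : J i (σ j) = 0 := hJ0 _ _ (fun h => hji (hinj _ _ h))
        have h1 : ((σ i).val < j.val) = (i.val < j.val) :=
          propext (hord1 i j hji hjσ).symm
        have h2 : (i.val < (σ j).val) = (i.val < j.val) :=
          propext (hord2 j i (fun h => hji h.symm) (fun h => hiσj h)).symm
        simp only [z1, z2, z3, z4, mul_zero, zero_mul, add_zero, zero_add, h1, h2,
          if_neg (show ¬ i = σ i from fun h => hσne i h.symm),
          if_neg (show ¬ j = σ j from fun h => hσne j h.symm), one_mul, ite_self]
        by_cases hij : i.val < j.val
        · simp only [if_pos hij]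
          have hvni : (σ i).val ≠ i.val := by simpa [Fin.ext_iff] using hσne i
          have hvnj : (σ j).val ≠ j.val := by simpa [Fin.ext_iff] using hσne j
          by_cases hi : i.val < (σ i).val
          · have ei := hJq i hi
            have hi' : ¬ (σ i).val < i.val := by omega
            simp only [if_neg (by omega : ¬ ((σ i).val < i.val ∧ i.val < j.val)), ei]
            by_cases hj : j.val < (σ j).val
            · have ej := hJq j hj
              simp only [if_pos (⟨hij, hj⟩ : i.val < j.val ∧ j.val < (σ j).val), ej]
              field_simp
              repeat first | ring1 | left
            · have hj2 : (σ j).val < j.val := by omega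
              have ej := hJq (σ j) (by rw [hσσ]; exact hj2)
              rw [hσσ] at ej
              simp only [if_neg (by omega : ¬ (i.val < j.val ∧ j.val < (σ j).val)), ej]
              field_simp
              repeat first | ring1 | left
          · have hi2 : (σ i).val < i.val := by omega
            have ei := hJq (σ i) (by rw [hσσ]; exact hi2)
            rw [hσσ] at ei
            simp only [if_pos (⟨hi2, hij⟩ : (σ i).val < i.val ∧ i.val < j.val), ei]
            by_cases hj : j.val < (σ j).val
            · have ej := hJq j hj
              simp only [if_pos (⟨hij, hj⟩ : i.val < j.val ∧ j.val < (σ j).val), ej]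
              field_simp
              repeat first | ring1 | left
            · have hj2 : (σ j).val < j.val := by omega
              have ej := hJq (σ j) (by rw [hσσ]; exact hj2)
              rw [hσσ] at ej
              simp only [if_neg (by omega : ¬ (i.val < j.val ∧ j.val < (σ j).val)), ej]
              field_simp
              repeat first | ring1 | left
        · simp only [if_neg hij, if_neg (by omega : ¬ ((σ i).val < i.val ∧ i.val < j.val)),
            if_neg (by omega : ¬ (i.val < j.val ∧ j.val < (σ j).val)), mul_zero, add_zero]
  · by_cases hS : j = σ k ∧ l = σ i
    · obtain ⟨hj, hl⟩ := hS
      subst hj hl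
      have hkσ : k ≠ σ i := fun h => hQ ⟨h, by rw [h, hσσ]⟩
      by_cases hik : i = k
      · -- case P ∧ S : indices (i, i, σ i, σ i)
        subst hik
        have z1 : J i i = 0 := hJ0 _ _ (Ne.symm (hσne i))
        have z2 : J (σ i) (σ i) = 0 := hJ0 _ _ (fun h => hσne i (hinj _ _ h.symm))
        have hvne : (σ i).val ≠ i.val := by simpa [Fin.ext_iff] using hσne i
        simp only [hσσ, z1, z2, mul_zero, zero_mul, add_zero, zero_add]
        split_ifs <;> first | ring1 | (exfalso; simp only [Fin.ext_iff, not_lt] at *; omega)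
      · -- case S only : indices (i, k, σ k, σ i) with i ∉ {k, σ k}
        have hiσk : i ≠ σ k := fun h => hkσ (((congrArg σ h).trans (hσσ k)).symm)
        have z1 : J i (σ k) = 0 := hJ0 _ _ (fun h => hik (hinj k i h).symm)
        have z2 : J k (σ i) = 0 := hJ0 _ _ (fun h => hik (hinj i k h))
        have z3 : J i k = 0 := hJ0 _ _ hkσ
        have z4 : J k i = 0 := hJ0 _ _ hiσk
        have h1 : (k.val < i.val) = ((σ k).val < (σ i).val) := by
          rw [propext (hord1 k i hik hiσk)]
          exact propext (hord2 i (σ k) (fun h => hiσk h.symm)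
            (fun h => hik (hinj k i h).symm))
        simp only [z1, z2, z3, z4, mul_zero, zero_mul, add_zero, zero_add, h1, ite_self,
          one_mul,
          if_neg (show ¬ σ k = i from fun h => hiσk h.symm),
          if_neg (show ¬ i = σ k from hiσk)]
    · by_cases hP : j = σ i ∧ l = σ k
      · -- case P only
        obtain ⟨hj, hl⟩ := hP
        subst hj hl
        have hkσ : k ≠ σ i := fun h => hQ ⟨h, by rw [h, hσσ]⟩
        have hik : i ≠ k := fun h => hS ⟨by rw [← h], by rw [h]⟩
        have z1 : J i k = 0 := hJ0 _ _ hkσ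
        have z2 : J k (σ i) = 0 := hJ0 _ _ (fun h => hik (hinj _ _ h))
        have z3 : J k i = 0 := hJ0 _ _ (fun h => hkσ (hinj _ _ (by rw [← h, hσσ])))
        simp only [z1, z2, z3, mul_zero, zero_mul, add_zero, zero_add,
          if_neg (show ¬ i = k from hik),
          if_neg (show ¬ σ i = k from fun h => hkσ h.symm),
          if_neg (show ¬ i = σ k from fun h => hkσ (hinj _ _ (by rw [← h, hσσ]))),
          if_neg (show ¬ σ i = σ k from fun h => hik (hinj _ _ h)), one_mul, ite_self]
        ring1
      · -- case none : all terms vanish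
        have hz1 : J i j * J k l = 0 := by
          by_cases h : j = σ i
          · have : l ≠ σ k := fun h' => hP ⟨h, h'⟩
            rw [hJ0 _ _ this, mul_zero]
          · rw [hJ0 _ _ h, zero_mul]
        have hz1' : J k l * J i j = 0 := by rw [mul_comm]; exact hz1
        have hz2 : J i k * J j l = 0 := by
          by_cases h : k = σ i
          · have : l ≠ σ j := fun h' => hQ ⟨h, h'⟩
            rw [hJ0 _ _ this, mul_zero]
          · rw [hJ0 _ _ h, zero_mul]
        have hz3 : J k j * J i l = 0 := by
          by_cases h : j = σ k
          · have : l ≠ σ i := fun h' => hS ⟨h, h'⟩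
            rw [hJ0 _ _ this, mul_zero]
          · rw [hJ0 _ _ h, zero_mul]
        have hz4 : J k i * J j l = 0 := by
          by_cases h : i = σ k
          · have hk : k = σ i := hinj _ _ (by rw [← h, hσσ])
            have : l ≠ σ j := fun h' => hQ ⟨hk, h'⟩
            rw [hJ0 _ _ this, mul_zero]
          · rw [hJ0 _ _ h, zero_mul]
        have hz5 : J k i * J l j = 0 := by
          by_cases h : i = σ k
          · have hk : k = σ i := hinj _ _ (by rw [← h, hσσ])
            have hlj : l ≠ σ j := fun h' => hQ ⟨hk, h'⟩
            have : j ≠ σ l := fun h' => hlj (hinj _ _ (by rw [← h', hσσ]))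
            rw [hJ0 _ _ this, mul_zero]
          · rw [hJ0 _ _ h, zero_mul]
        simp only [hz1, hz1', hz2, hz3, hz4, hz5, mul_zero, zero_mul, mul_ite, ite_self,
          add_zero, zero_add]

/-! ### The concrete involution -/

def sig (n : ℕ) : Fin (2 * n) → Fin (2 * n) := fun x =>
  ⟨if x.val % 2 = 0 then x.val + 1 else x.val - 1, by have := x.isLt; split <;> omega⟩

lemma sig_val {n : ℕ} (x : Fin (2 * n)) :
    (sig n x).val = if x.val % 2 = 0 then x.val + 1 else x.val - 1 := rfl

lemma sig_sig {n : ℕ} (a : Fin (2 * n)) : sig n (sig n a) = a := by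
  have := a.isLt
  apply Fin.ext
  simp only [sig_val]
  split_ifs <;> omega

lemma sig_ne {n : ℕ} (a : Fin (2 * n)) : sig n a ≠ a := by
  intro h
  have := congrArg Fin.val h
  rw [sig_val] at this
  split_ifs at this <;> omega

lemma sig_ord1 {n : ℕ} (a b : Fin (2 * n)) (h1 : b ≠ a) (h2 : b ≠ sig n a) :
    (a.val < b.val ↔ (sig n a).val < b.val) := by
  have e1 : b.val ≠ a.val := fun h => h1 (Fin.ext h)
  have e2 : b.val ≠ (sig n a).val := fun h => h2 (Fin.ext h)
  rw [sig_val] at e2 ⊢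
  split_ifs at e2 ⊢ <;> omega

lemma sig_ord2 {n : ℕ} (a b : Fin (2 * n)) (h1 : b ≠ a) (h2 : b ≠ sig n a) :
    (b.val < a.val ↔ b.val < (sig n a).val) := by
  have e1 : b.val ≠ a.val := fun h => h1 (Fin.ext h)
  have e2 : b.val ≠ (sig n a).val := fun h => h2 (Fin.ext h)
  rw [sig_val] at e2 ⊢
  split_ifs at e2 ⊢ <;> omega

end RE

/-- type AII: the matrix
`J = Σ_{k=1}^{n} ( −a_{2k−1} e_{2k,2k−1} + a_{2k} e_{2k−1,2k} )`, with `a_{2k−1} = q a_{2k}`,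
satisfies the reflection equation for the type-A R-matrix of size `N = 2n`. -/
theorem reflection_equation_AII (q : ℝ) (hq0 : 0 < q) (hq1 : q < 1)
    (n : ℕ) (hn : 1 ≤ n) (a : Fin (2 * n) → ℝ) (ha : ∀ k, a k ≠ 0)
    (haq : ∀ k : Fin n, a (dblo k) = q * a (dble k)) :
    ReflectionEq (RmatA q (2 * n))
      (∑ k : Fin n,
        ((-(a (dblo k) : ℂ)) • e (dble k) (dblo k) + ((a (dble k) : ℂ)) • e (dblo k) (dble k))) := by
  classical
  set J : Matrix (Fin (2 * n)) (Fin (2 * n)) ℂ :=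
    ∑ k : Fin n,
      ((-(a (dblo k) : ℂ)) • e (dble k) (dblo k) + ((a (dble k) : ℂ)) • e (dblo k) (dble k))
    with hJdef
  have hqc : (q : ℂ) ≠ 0 := Complex.ofReal_ne_zero.mpr hq0.ne'
  -- entries of J
  have hJ0 : ∀ i j : Fin (2 * n), j ≠ RE.sig n i → J i j = 0 := by
    intro i j h
    have hv : j.val ≠ (RE.sig n i).val := fun hh => h (Fin.ext hh)
    rw [RE.sig_val] at hv
    rw [hJdef, Matrix.sum_apply]
    apply Finset.sum_eq_zero
    intro k _
    simp only [Matrix.add_apply, Matrix.smul_apply, e, Matrix.single,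
      Matrix.of_apply, smul_eq_mul]
    split_ifs <;>
      first
        | ring1
        | (exfalso; simp only [Fin.ext_iff, dble, dblo, RE.sig_val, not_lt] at *; first | omega | (split_ifs at * <;> omega) | simp_all)
  have hJoe : ∀ m : Fin n, J (dblo m) (dble m) = (a (dble m) : ℂ) := by
    intro m
    rw [hJdef, Matrix.sum_apply, Finset.sum_eq_single m]
    · simp only [Matrix.add_apply, Matrix.smul_apply, e, Matrix.single,
        Matrix.of_apply, smul_eq_mul]
      split_ifs <;>
        first
          | ring1
          | (exfalso; simp only [Fin.ext_iff, dble, dblo, RE.sig_val, not_lt] at *; first | omega | (split_ifs at * <;> omega) | simp_all)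
    · intro b _ hb
      have hbv : b.val ≠ m.val := fun hh => hb (Fin.ext hh)
      simp only [Matrix.add_apply, Matrix.smul_apply, e, Matrix.single,
        Matrix.of_apply, smul_eq_mul]
      split_ifs <;>
        first
          | ring1
          | (exfalso; simp only [Fin.ext_iff, dble, dblo, RE.sig_val, not_lt] at *; first | omega | (split_ifs at * <;> omega) | simp_all)
    · intro h; exact absurd (Finset.mem_univ m) h
  have hJeo : ∀ m : Fin n, J (dble m) (dblo m) = -(a (dblo m) : ℂ) := by
    intro m
    rw [hJdef, Matrix.sum_apply, Finset.sum_eq_single m]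
    · simp only [Matrix.add_apply, Matrix.smul_apply, e, Matrix.single,
        Matrix.of_apply, smul_eq_mul]
      split_ifs <;>
        first
          | ring1
          | (exfalso; simp only [Fin.ext_iff, dble, dblo, RE.sig_val, not_lt] at *; first | omega | (split_ifs at * <;> omega) | simp_all)
    · intro b _ hb
      have hbv : b.val ≠ m.val := fun hh => hb (Fin.ext hh)
      simp only [Matrix.add_apply, Matrix.smul_apply, e, Matrix.single,
        Matrix.of_apply, smul_eq_mul]
      split_ifs <;>
        first
          | ring1
          | (exfalso; simp only [Fin.ext_iff, dble, dblo, RE.sig_val, not_lt] at *; first | omega | (split_ifs at * <;> omega) | simp_all)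
    · intro h; exact absurd (Finset.mem_univ m) h
  have hJq : ∀ i : Fin (2 * n), i.val < (RE.sig n i).val →
      J (RE.sig n i) i = -(q : ℂ) * J i (RE.sig n i) := by
    intro i hi
    have hpar : i.val % 2 = 0 := by
      rw [RE.sig_val] at hi; split_ifs at hi <;> omega
    have hin := i.isLt
    set m : Fin n := ⟨i.val / 2, by omega⟩ with hm
    have hio : dblo m = i := Fin.ext (by show 2 * (i.val / 2) = i.val; omega)
    have hie : dble m = RE.sig n i := Fin.ext (by
      show 2 * (i.val / 2) + 1 = (RE.sig n i).val
      rw [RE.sig_val, if_pos hpar]; omega)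
    rw [← hie, ← hio, hJeo m, hJoe m]
    rw [haq m]
    push_cast
    ring
  -- replace R by its entry form
  unfold ReflectionEq
  rw [RE.RmatA_eq q (2 * n)]
  set c : ℂ := ((q ^ (-1 / ((2 * n : ℕ) : ℝ)) : ℝ) : ℂ) with hc
  have hpt : ptransp (c • Matrix.of (RE.Rf (N := 2 * n) (q : ℂ))) = c • ptransp (Matrix.of (RE.Rf (N := 2 * n) (q : ℂ))) := rfl
  rw [hpt]
  have eL : Matrix.of (RE.Rf (N := 2 * n) (q : ℂ)) * kron J 1 * ptransp (Matrix.of (RE.Rf (N := 2 * n) (q : ℂ))) * kron 1 J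
      = Matrix.of (RE.Lf (N := 2 * n) (q : ℂ) J) := by
    rw [RE.mul1, RE.mul2, RE.mul3]
  have eR : kron 1 J * ptransp (Matrix.of (RE.Rf (N := 2 * n) (q : ℂ))) * kron J 1 * Matrix.of (RE.Rf (N := 2 * n) (q : ℂ))
      = Matrix.of (RE.Rhf (N := 2 * n) (q : ℂ) J) := by
    rw [RE.nul1, RE.nul2, RE.nul3]
  have key : Matrix.of (RE.Lf (N := 2 * n) (q : ℂ) J) = Matrix.of (RE.Rhf (N := 2 * n) (q : ℂ) J) := by
    ext ⟨i, k⟩ ⟨j, l⟩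
    exact RE.core (q : ℂ) hqc (RE.sig n) J RE.sig_sig RE.sig_ne hJ0 hJq
      RE.sig_ord1 RE.sig_ord2 i k j l
  calc (c • Matrix.of (RE.Rf (N := 2 * n) (q : ℂ))) * kron J 1 * (c • ptransp (Matrix.of (RE.Rf (N := 2 * n) (q : ℂ))))
        * kron 1 J
      = (c * c) • (Matrix.of (RE.Rf (N := 2 * n) (q : ℂ)) * kron J 1 * ptransp (Matrix.of (RE.Rf (N := 2 * n) (q : ℂ)))
        * kron 1 J) := by
        simp only [smul_mul_assoc, mul_smul_comm, smul_smul]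
    _ = (c * c) • Matrix.of (RE.Rhf (N := 2 * n) (q : ℂ) J) := by rw [eL, key]
    _ = kron 1 J * (c • ptransp (Matrix.of (RE.Rf (N := 2 * n) (q : ℂ)))) * kron J 1
        * (c • Matrix.of (RE.Rf (N := 2 * n) (q : ℂ))) := by
        rw [← eR]
        simp only [smul_mul_assoc, mul_smul_comm, smul_smul]
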